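/- arXiv:2012.12945 — 2 statements merged into one kernel-verified Lean document; each statement's English description precedes it below -/
import Mathlib

section
/- In the one-dimensional Almgren-Chriss problem with Lagrangian L(q,v) = (λ/2)v² + (κσ²/2)q², the unique minimizer of ∫₀ᵀ L(q(t), q̇(t)) dt over C² paths with q(0)=q₀ and q(T)=0 is q*(t) = q₀ · sinh(γ(T−t))/sinh(γT), where γ = √(κσ²/λ). -/
open Real intervalIntegral MeasureTheory

/-- In the 1-D Almgren-Chriss problem with Lagrangian `L(q,v) = (λ/2)v² + (κσ²/2)q²`, the
unique minimizer of `∫₀ᵀ L(q,q̇)` over C² paths with `q(0)=q₀`, `q(T)=0` is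
`q*(t) = q₀ sinh(γ(T−t))/sinh(γT)`, `γ = √(κσ²/λ)`. -/
theorem stmt4 (lam κ σ T q0 : ℝ) (hlam : 0 < lam) (hκ : 0 < κ) (hσ : 0 < σ) (hT : 0 < T)
    (γ : ℝ) (hγ : γ = Real.sqrt (κ * σ^2 / lam))
    (qstar : ℝ → ℝ)
    (hqstar : ∀ t, qstar t = q0 * Real.sinh (γ * (T - t)) / Real.sinh (γ * T)) :
    qstar 0 = q0 ∧ qstar T = 0 ∧ ContDiff ℝ 2 qstar ∧
    ∀ q : ℝ → ℝ, ContDiff ℝ 2 q → q 0 = q0 → q T = 0 →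
      ((∫ t in (0:ℝ)..T, (lam/2) * (deriv qstar t)^2 + (κ * σ^2/2) * (qstar t)^2) ≤
        ∫ t in (0:ℝ)..T, (lam/2) * (deriv q t)^2 + (κ * σ^2/2) * (q t)^2) ∧
      ((∫ t in (0:ℝ)..T, (lam/2) * (deriv q t)^2 + (κ * σ^2/2) * (q t)^2) =
        (∫ t in (0:ℝ)..T, (lam/2) * (deriv qstar t)^2 + (κ * σ^2/2) * (qstar t)^2) →
        Set.EqOn q qstar (Set.Icc 0 T)) := by
  have hc : (0:ℝ) < κ * σ^2 := by positivity
  have hγpos : 0 < γ := by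
    rw [hγ]; exact Real.sqrt_pos.mpr (by positivity)
  have hγ2 : lam * γ^2 = κ * σ^2 := by
    have h : γ^2 = κ * σ^2 / lam := by
      rw [hγ]; exact Real.sq_sqrt (by positivity)
    rw [h]; field_simp
  have hSpos : 0 < Real.sinh (γ * T) := Real.sinh_pos_iff.mpr (by positivity)
  have hS : Real.sinh (γ * T) ≠ 0 := ne_of_gt hSpos
  set a : ℝ := q0 / Real.sinh (γ * T) with ha
  have hq_eq : qstar = fun t => a * Real.sinh (γ * (T - t)) := by
    funext t; rw [hqstar t, ha]; ring
  -- first derivative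
  have hinner : ∀ t : ℝ, HasDerivAt (fun s : ℝ => γ * (T - s)) (-γ) t := by
    intro t
    simpa using ((hasDerivAt_id t).const_sub T).const_mul γ
  have hd1 : ∀ t, HasDerivAt qstar (-(a * γ) * Real.cosh (γ * (T - t))) t := by
    intro t
    rw [hq_eq]
    have h := ((Real.hasDerivAt_sinh (γ * (T - t))).comp t (hinner t)).const_mul a
    have h2 : a * (Real.cosh (γ * (T - t)) * -γ) = -(a * γ) * Real.cosh (γ * (T - t)) := by ring
    exact h2 ▸ h
  have hderiv1 : deriv qstar = fun t => -(a * γ) * Real.cosh (γ * (T - t)) := by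
    funext t; exact (hd1 t).deriv
  have hd2 : ∀ t, HasDerivAt (fun s => -(a * γ) * Real.cosh (γ * (T - s)))
      (γ^2 * qstar t) t := by
    intro t
    have h := ((Real.hasDerivAt_cosh (γ * (T - t))).comp t (hinner t)).const_mul (-(a * γ))
    have h2 : -(a * γ) * (Real.sinh (γ * (T - t)) * -γ) = γ^2 * qstar t := by
      rw [hq_eq]; ring
    exact h2 ▸ h
  have hcont_d1 : Continuous (deriv qstar) := by
    rw [hderiv1]
    exact continuous_const.mul (Real.continuous_cosh.comp
      (continuous_const.mul (continuous_const.sub continuous_id)))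
  have hcont_qstar : Continuous qstar := by
    rw [hq_eq]
    exact continuous_const.mul (Real.continuous_sinh.comp
      (continuous_const.mul (continuous_const.sub continuous_id)))
  have hcd : ContDiff ℝ 2 qstar := by
    rw [hq_eq]
    exact contDiff_const.mul (Real.contDiff_sinh.comp
      (contDiff_const.mul (contDiff_const.sub contDiff_id)))
  refine ⟨by rw [hqstar 0, sub_zero]; field_simp, by rw [hqstar T]; simp, hcd, ?_⟩
  intro q hq hq0 hqT
  have hqdiff : Differentiable ℝ q := hq.differentiable (by norm_num)
  have hcont_dq : Continuous (deriv q) := hq.continuous_deriv (by norm_num)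
  have hcont_q : Continuous q := hq.continuous
  -- cross term
  set B : ℝ → ℝ := fun t => lam * deriv qstar t * (deriv q t - deriv qstar t)
      + (κ * σ^2) * qstar t * (q t - qstar t) with hB
  set G : ℝ → ℝ := fun t => (lam/2) * (deriv q t - deriv qstar t)^2
      + (κ * σ^2/2) * (q t - qstar t)^2 with hG
  have hcontB : Continuous B := by fun_prop
  have hcontG : Continuous G := by fun_prop
  have hcontLq : Continuous (fun t => (lam/2) * (deriv q t)^2 + (κ * σ^2/2) * (q t)^2) := by
    fun_prop
  have hcontLs : Continuous (fun t => (lam/2) * (deriv qstar t)^2 + (κ * σ^2/2) * (qstar t)^2) := by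
    fun_prop
  have hF : ∀ t, HasDerivAt (fun s => lam * deriv qstar s * (q s - qstar s)) (B t) t := by
    intro t
    have hh : HasDerivAt (fun s => q s - qstar s) (deriv q t - deriv qstar t) t :=
      ((hqdiff t).hasDerivAt).sub (hd1 t).differentiableAt.hasDerivAt
    have hd1' : HasDerivAt (fun s => lam * deriv qstar s) (lam * (γ^2 * qstar t)) t := by
      have : (fun s => lam * deriv qstar s)
          = fun s => lam * (-(a * γ) * Real.cosh (γ * (T - s))) := by
        funext s; rw [hderiv1]
      rw [this]
      exact (hd2 t).const_mul lam
    have := hd1'.mul hh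
    have key : lam * (γ^2 * qstar t) * (q t - qstar t)
        + lam * deriv qstar t * (deriv q t - deriv qstar t) = B t := by
      rw [hB]
      have : lam * (γ^2 * qstar t) = (κ * σ^2) * qstar t := by
        rw [← hγ2]; ring
      rw [show lam * (γ^2 * qstar t) * (q t - qstar t)
          = (κ * σ^2) * qstar t * (q t - qstar t) by rw [this]]
      ring
    exact this.congr_deriv (by rw [← key])
  have hintB : ∫ t in (0:ℝ)..T, B t = 0 := by
    rw [intervalIntegral.integral_eq_sub_of_hasDerivAt
      (fun t _ => hF t) (hcontB.intervalIntegrable 0 T)]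
    have h1 : qstar T = 0 := by rw [hqstar T]; simp
    have h0 : qstar 0 = q0 := by rw [hqstar 0, sub_zero]; field_simp
    rw [hqT, h1, hq0, h0]; ring
  -- pointwise decomposition
  have hdecomp : ∀ t, (lam/2) * (deriv q t)^2 + (κ * σ^2/2) * (q t)^2
      = ((lam/2) * (deriv qstar t)^2 + (κ * σ^2/2) * (qstar t)^2) + B t + G t := by
    intro t; rw [hB, hG]; ring
  have hsplit : (∫ t in (0:ℝ)..T, (lam/2) * (deriv q t)^2 + (κ * σ^2/2) * (q t)^2)
      = (∫ t in (0:ℝ)..T, (lam/2) * (deriv qstar t)^2 + (κ * σ^2/2) * (qstar t)^2)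
        + (∫ t in (0:ℝ)..T, G t) := by
    have : (∫ t in (0:ℝ)..T, (lam/2) * (deriv q t)^2 + (κ * σ^2/2) * (q t)^2)
        = ∫ t in (0:ℝ)..T,
          (((lam/2) * (deriv qstar t)^2 + (κ * σ^2/2) * (qstar t)^2) + B t) + G t := by
      apply intervalIntegral.integral_congr
      intro t _
      exact hdecomp t
    rw [this, intervalIntegral.integral_add (f := fun t => ((lam/2) * (deriv qstar t)^2 + (κ * σ^2/2) * (qstar t)^2) + B t)
        ((hcontLs.add hcontB).intervalIntegrable 0 T) (hcontG.intervalIntegrable 0 T),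
      intervalIntegral.integral_add
        (hcontLs.intervalIntegrable 0 T) (hcontB.intervalIntegrable 0 T), hintB]
    ring
  have hGnonneg : ∀ t, 0 ≤ G t := by
    intro t; rw [hG]; positivity
  have hintG_nonneg : 0 ≤ ∫ t in (0:ℝ)..T, G t :=
    intervalIntegral.integral_nonneg (le_of_lt hT) (fun t _ => hGnonneg t)
  constructor
  · rw [hsplit]; linarith
  · intro heq
    have hGzero : ∫ t in (0:ℝ)..T, G t = 0 := by rw [hsplit] at heq; linarith
    have hae : G =ᵐ[volume.restrict (Set.Ioc 0 T)] 0 := by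
      rw [← intervalIntegral.integral_eq_zero_iff_of_le_of_nonneg_ae (le_of_lt hT)
        (Filter.Eventually.of_forall (fun t => hGnonneg t))
        (hcontG.intervalIntegrable 0 T)]
      exact hGzero
    have hEqOn : Set.EqOn G 0 (Set.Ioc 0 T) :=
      Measure.eqOn_Ioc_of_ae_eq volume hae hcontG.continuousOn continuousOn_const
    intro t ht
    rcases eq_or_lt_of_le ht.1 with h0 | h0
    · rw [← h0, hq0, hqstar 0, sub_zero]; field_simp
    · have hG0 : G t = 0 := hEqOn ⟨h0, ht.2⟩
      rw [hG] at hG0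
      have h1 : (0:ℝ) ≤ (lam/2) * (deriv q t - deriv qstar t)^2 := by positivity
      have h2 : (κ * σ^2/2) * (q t - qstar t)^2 = 0 := by nlinarith [sq_nonneg (q t - qstar t)]
      have : (q t - qstar t)^2 = 0 := by
        have hc2 : (0:ℝ) < κ * σ^2/2 := by positivity
        exact (mul_eq_zero.mp h2).resolve_left (ne_of_gt hc2)
      have := pow_eq_zero_iff (n := 2) (by norm_num) |>.mp this
      linarith [this]
end

section
/- Let V(t,q) be the value function of the one-dimensional Almgren-Chriss problem: V(t,q) = min over C² paths on [t,T] with q(t)=q, q(T)=0 of ∫ₜᵀ [(λ/2)v(s)² + (κσ²/2)q(s)²] ds. Then V(t,q) = (λγ/2) q² coth(γ(T−t)), where γ = √(κσ²/λ), and V satisfies the Hamilton-Jacobi equation ∂_t V − (1/(2λ))(∂_q V)² + (κσ²/2) q² = 0 on [0,T) × ℝ (with sign conventions matching V being a cost to be minimized). -/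
open Real Set Filter intervalIntegral

set_option maxHeartbeats 1000000

open Real Set Filter intervalIntegral

private lemma neg_lin_hasDerivAt (γ T s : ℝ) : HasDerivAt (fun u : ℝ => γ * (T - u)) (-γ) s := by
  simpa using ((hasDerivAt_const s T).sub (hasDerivAt_id s)).const_mul γ

private lemma coth_hasDerivAt (γ T s : ℝ) (h : Real.sinh (γ * (T - s)) ≠ 0) :
    HasDerivAt (fun u => Real.cosh (γ * (T - u)) / Real.sinh (γ * (T - u)))
      (γ / (Real.sinh (γ * (T - s)))^2) s := by
  have h1 := neg_lin_hasDerivAt γ T s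
  have := (h1.cosh).div (h1.sinh) h
  refine this.congr_deriv ?_
  have hid := Real.cosh_sq_sub_sinh_sq (γ * (T - s))
  field_simp
  linear_combination γ * hid

private lemma memb_aux (lam κ σ T : ℝ) (hlam : 0 < lam) (hκ : 0 < κ) (hσ : 0 < σ) (hT : 0 < T)
    (γ : ℝ) (hγpos : 0 < γ) (hγ2 : lam * γ^2 = κ * σ^2)
    (t : ℝ) (htT : t < T) (q : ℝ) :
    ∃ Q : ℝ → ℝ, ContDiff ℝ 2 Q ∧ Q t = q ∧ Q T = 0 ∧
      (lam * γ / 2) * q^2 * (Real.cosh (γ * (T - t)) / Real.sinh (γ * (T - t)))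
        = ∫ s in t..T, (lam/2) * (deriv Q s)^2 + (κ * σ^2/2) * (Q s)^2 := by
  have hX : 0 < γ * (T - t) := by nlinarith
  have hS : 0 < Real.sinh (γ * (T - t)) := Real.sinh_pos_iff.mpr hX
  set S := Real.sinh (γ * (T - t)) with hSdef
  set Q : ℝ → ℝ := fun s => q * Real.sinh (γ * (T - s)) / S with hQdef
  have hQc : ContDiff ℝ 2 Q := by
    apply ContDiff.div_const
    exact contDiff_const.mul ((Real.contDiff_sinh.of_le le_top).comp
      (contDiff_const.mul (contDiff_const.sub contDiff_id)))
  have hQd : ∀ s, HasDerivAt Q (-(q * γ * Real.cosh (γ * (T - s))) / S) s := by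
    intro s
    have h1 := neg_lin_hasDerivAt γ T s
    have := (h1.sinh.const_mul q).div_const S
    refine this.congr_deriv ?_; ring
  have hderiv : ∀ s, deriv Q s = -(q * γ * Real.cosh (γ * (T - s))) / S :=
    fun s => (hQd s).deriv
  refine ⟨Q, hQc, ?_, ?_, ?_⟩
  · simp [hQdef, ← hSdef, div_self hS.ne', mul_div_assoc]
  · simp [hQdef]
  · set H : ℝ → ℝ := fun s => -(lam * γ * q^2 / (4 * S^2)) * Real.sinh (2 * (γ * (T - s))) with hHdef
    have hH : ∀ s, HasDerivAt H ((lam/2) * (deriv Q s)^2 + (κ * σ^2/2) * (Q s)^2) s := by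
      intro s
      have h2 : HasDerivAt (fun u : ℝ => 2 * (γ * (T - u))) (-(2*γ)) s := by
        simpa using (neg_lin_hasDerivAt γ T s).const_mul 2
      have := h2.sinh.const_mul (-(lam * γ * q^2 / (4 * S^2)))
      refine this.congr_deriv ?_
      rw [hderiv s]
      simp only [hQdef]
      rw [← hγ2, Real.cosh_two_mul]
      field_simp
      ring
    have hcont : Continuous fun s => (lam/2) * (deriv Q s)^2 + (κ * σ^2/2) * (Q s)^2 := by
      have : (fun s => (lam/2) * (deriv Q s)^2 + (κ * σ^2/2) * (Q s)^2)
          = fun s => (lam/2) * (-(q * γ * Real.cosh (γ * (T - s))) / S)^2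
            + (κ * σ^2/2) * (q * Real.sinh (γ * (T - s)) / S)^2 := by
        funext s; rw [hderiv s]
      rw [this]; fun_prop
    rw [intervalIntegral.integral_eq_sub_of_hasDerivAt (fun s _ => hH s)
      (hcont.intervalIntegrable t T)]
    simp only [hHdef, sub_self, mul_zero, Real.sinh_zero]
    rw [show 2 * (γ * (T - t)) = 2 * (γ * (T-t)) from rfl, Real.sinh_two_mul]
    rw [← hSdef]
    field_simp
    ring

private lemma lb_aux (lam κ σ T : ℝ) (hlam : 0 < lam)
    (γ : ℝ) (hγpos : 0 < γ) (hγ2 : lam * γ^2 = κ * σ^2)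
    (t : ℝ) (htT : t < T) (q : ℝ)
    (Q : ℝ → ℝ) (hQ : ContDiff ℝ 2 Q) (hQt : Q t = q) (hQT : Q T = 0) :
    (lam * γ / 2) * q^2 * (Real.cosh (γ * (T - t)) / Real.sinh (γ * (T - t)))
      ≤ ∫ s in t..T, (lam/2) * (deriv Q s)^2 + (κ * σ^2/2) * (Q s)^2 := by
  have hQdiff : Differentiable ℝ Q := hQ.differentiable (by norm_num)
  have hQ' : Continuous (deriv Q) := hQ.continuous_deriv one_le_two
  have hQcont : Continuous Q := hQdiff.continuous
  set F : ℝ → ℝ := fun s => (lam/2) * (deriv Q s)^2 + (κ * σ^2/2) * (Q s)^2 with hFdef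
  have hFcont : Continuous F := by fun_prop
  have hFnonneg : ∀ s, 0 ≤ F s := by
    intro s
    have : (0:ℝ) < κ * σ^2 := by rw [← hγ2]; positivity
    simp only [hFdef]; positivity
  set R : ℝ → ℝ := fun s => Real.cosh (γ * (T - s)) / Real.sinh (γ * (T - s)) with hRdef
  set W : ℝ → ℝ := fun s => (lam * γ / 2) * (Q s)^2 * R s with hWdef
  set G : ℝ → ℝ := fun s => (lam/2) * (deriv Q s + γ * R s * Q s)^2 with hGdef
  have hsinh : ∀ s < T, 0 < Real.sinh (γ * (T - s)) := by
    intro s hs; exact Real.sinh_pos_iff.mpr (by nlinarith)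
  -- derivative of W on Iio T
  have hWd : ∀ s < T, HasDerivAt W (G s - F s) s := by
    intro s hs
    have hR := coth_hasDerivAt γ T s (hsinh s hs).ne'
    have hQs : HasDerivAt (fun u => (Q u)^2) (2 * Q s * deriv Q s) s := by
      simpa [mul_comm, mul_assoc] using
        ((hQdiff s).hasDerivAt.fun_pow 2)
    have := ((hQs.const_mul (lam * γ / 2)).mul hR)
    refine this.congr_deriv ?_
    have hid := Real.cosh_sq_sub_sinh_sq (γ * (T - s))
    simp only [hGdef, hFdef, hRdef, ← hγ2]
    have hSne := (hsinh s hs).ne'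
    field_simp
    linear_combination (-(γ^2*(Q s)^2)) * hid
  -- continuity of G on Iio T
  have hGcont : ContinuousOn G (Set.Iio T) := by
    apply ContinuousOn.mul continuousOn_const
    apply ContinuousOn.pow
    apply ContinuousOn.add hQ'.continuousOn
    apply ContinuousOn.mul
    · apply ContinuousOn.mul continuousOn_const
      exact ContinuousOn.div (by fun_prop) (by fun_prop)
        (fun s hs => (hsinh s hs).ne')
    · exact hQcont.continuousOn
  -- key inequality for u ∈ [t, T)
  have key : ∀ u ∈ Set.Ico t T, W t - W u ≤ ∫ s in t..T, F s := by
    rintro u ⟨htu, huT⟩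
    have hsub : Set.uIcc t u ⊆ Set.Iio T := by
      rw [Set.uIcc_of_le htu]
      exact fun s hs => lt_of_le_of_lt hs.2 huT
    have hGint : IntervalIntegrable G MeasureTheory.volume t u :=
      (hGcont.mono hsub).intervalIntegrable
    have hFint : IntervalIntegrable F MeasureTheory.volume t u :=
      hFcont.intervalIntegrable t u
    have hFTC : ∫ s in t..u, (G s - F s) = W u - W t :=
      intervalIntegral.integral_eq_sub_of_hasDerivAt
        (fun s hs => hWd s (hsub hs)) (hGint.sub hFint)
    rw [intervalIntegral.integral_sub hGint hFint] at hFTC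
    have hGnn : 0 ≤ ∫ s in t..u, G s :=
      intervalIntegral.integral_nonneg htu (fun s _ => by simp only [hGdef]; positivity)
    have hsplit : (∫ s in t..u, F s) + (∫ s in u..T, F s) = ∫ s in t..T, F s :=
      intervalIntegral.integral_add_adjacent_intervals
        (hFcont.intervalIntegrable t u) (hFcont.intervalIntegrable u T)
    have h2 : 0 ≤ ∫ s in u..T, F s :=
      intervalIntegral.integral_nonneg huT.le (fun s _ => hFnonneg s)
    linarith
  -- bound on W near T
  obtain ⟨M, hM⟩ := (isCompact_Icc : IsCompact (Set.Icc t T)).exists_bound_of_continuousOn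
    hQ'.continuousOn
  have hM0 : 0 ≤ M := le_trans (norm_nonneg _) (hM t ⟨le_refl t, htT.le⟩)
  have hQbound : ∀ u ∈ Set.Icc t T, |Q u| ≤ M * (T - u) := by
    intro u hu
    have := Convex.norm_image_sub_le_of_norm_deriv_le
      (fun x (hx : x ∈ Set.Icc t T) => hQdiff x)
      hM (convex_Icc t T) hu (Set.right_mem_Icc.mpr (le_trans hu.1 hu.2))
    rw [hQT] at this
    simpa [abs_of_nonpos, abs_of_nonneg, hu.2, sub_nonneg.mpr hu.2, abs_sub_comm,
      Real.norm_eq_abs, abs_of_nonneg (sub_nonneg.mpr hu.2)] using this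
  set C : ℝ := (lam/2) * M^2 * Real.cosh (γ * (T - t)) with hCdef
  have hC0 : 0 ≤ C := by positivity
  have hWu : ∀ u ∈ Set.Ico t T, W u ≤ C * (T - u) := by
    rintro u ⟨htu, huT⟩
    have hX : 0 < γ * (T - u) := by nlinarith
    have hs := hsinh u huT
    have hq2 : (Q u)^2 ≤ M^2 * (T - u)^2 := by
      have h := hQbound u ⟨htu, huT.le⟩
      have := sq_le_sq' (by linarith [abs_nonneg (Q u), neg_abs_le (Q u)]) (le_trans (le_abs_self _) h)
      calc (Q u)^2 = |Q u|^2 := (sq_abs _).symm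
        _ ≤ (M * (T - u))^2 := pow_le_pow_left₀ (abs_nonneg _) h 2
        _ = M^2 * (T - u)^2 := by ring
    have hcosh : Real.cosh (γ * (T - u)) ≤ Real.cosh (γ * (T - t)) := by
      rw [Real.cosh_le_cosh]
      rw [abs_of_nonneg hX.le, abs_of_nonneg (by nlinarith : (0:ℝ) ≤ γ * (T - t))]
      nlinarith
    have hsinh2 : γ * (T - u) ≤ Real.sinh (γ * (T - u)) :=
      Real.self_le_sinh_iff.mpr hX.le
    have h1 : Q u^2 * Real.cosh (γ*(T-u)) ≤ M^2*(T-u)^2 * Real.cosh (γ*(T-t)) :=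
      mul_le_mul hq2 hcosh (by positivity) (by positivity)
    have h4 : lam*γ/2*(M^2*(T-u)^2*Real.cosh (γ*(T-t))) = C*(T-u)*(γ*(T-u)) := by
      rw [hCdef]; ring
    have h3 : C*(T-u)*(γ*(T-u)) ≤ C*(T-u)*(Real.sinh (γ*(T-u))) :=
      mul_le_mul_of_nonneg_left hsinh2 (mul_nonneg hC0 (by linarith))
    simp only [hWdef, hRdef]
    rw [show lam * γ / 2 * Q u ^ 2 * (Real.cosh (γ * (T - u)) / Real.sinh (γ * (T - u)))
        = (lam * γ / 2 * (Q u ^ 2 * Real.cosh (γ * (T - u)))) / Real.sinh (γ * (T - u)) from by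
      ring]
    rw [div_le_iff₀ hs]
    nlinarith [mul_le_mul_of_nonneg_left h1 (by positivity : (0:ℝ) ≤ lam*γ/2)]
  -- conclude by taking u → T⁻
  have hlim : Filter.Tendsto (fun u => C * (T - u)) (nhdsWithin T (Set.Iio T)) (nhds 0) := by
    apply Filter.Tendsto.mono_left _ nhdsWithin_le_nhds
    have : Continuous (fun u : ℝ => C * (T - u)) := by fun_prop
    simpa using this.tendsto T
  have hev : ∀ᶠ u in nhdsWithin T (Set.Iio T),
      W t - (∫ s in t..T, F s) ≤ C * (T - u) := by
    filter_upwards [Ioo_mem_nhdsLT_of_mem (Set.mem_Ioc.mpr ⟨htT, le_refl T⟩)] with u hu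
    have h1 := key u ⟨hu.1.le, hu.2⟩
    have h2 := hWu u ⟨hu.1.le, hu.2⟩
    linarith
  have hfin : W t - (∫ s in t..T, F s) ≤ 0 := ge_of_tendsto hlim hev
  have hWt : W t = (lam * γ / 2) * q^2 * (Real.cosh (γ * (T - t)) / Real.sinh (γ * (T - t))) := by
    simp only [hWdef, hRdef, hQt]
  linarith

private lemma hjb_aux (lam κ σ T : ℝ) (hlam : 0 < lam) (hκ : 0 < κ) (hσ : 0 < σ) (hT : 0 < T)
    (γ : ℝ) (hγ : γ = Real.sqrt (κ * σ^2 / lam))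
    (V : ℝ → ℝ → ℝ)
    (hV : ∀ t q, V t q = (lam * γ / 2) * q^2 * (Real.cosh (γ * (T - t)) / Real.sinh (γ * (T - t)))) :
    (∀ t ∈ Set.Ico (0:ℝ) T, ∀ q : ℝ,
      deriv (fun s => V s q) t - (deriv (fun y => V t y) q)^2 / (2 * lam)
        + (κ * σ^2/2) * q^2 = 0) := by
  have hγpos : 0 < γ := by rw [hγ]; exact Real.sqrt_pos.mpr (by positivity)
  have hγ2 : lam * γ^2 = κ * σ^2 := by
    rw [hγ, Real.sq_sqrt (by positivity)]; field_simp
  intro t ht q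
  obtain ⟨ht0, htT⟩ := ht
  have hX : 0 < γ * (T - t) := by nlinarith
  have hS : 0 < Real.sinh (γ * (T - t)) := Real.sinh_pos_iff.mpr hX
  have hVt : deriv (fun s => V s q) t = (lam * γ / 2) * q^2 * (γ / (Real.sinh (γ * (T - t)))^2) := by
    have he : (fun s => V s q) = fun s => (lam * γ / 2) * q^2 *
        (Real.cosh (γ * (T - s)) / Real.sinh (γ * (T - s))) := funext fun s => hV s q
    rw [he]
    exact ((coth_hasDerivAt γ T t hS.ne').const_mul _).deriv
  have hVq : deriv (fun y => V t y) q
      = (lam * γ / 2) * (2 * q) * (Real.cosh (γ * (T - t)) / Real.sinh (γ * (T - t))) := by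
    have he : (fun y => V t y) = fun y => ((lam * γ / 2) * y^2) *
        (Real.cosh (γ * (T - t)) / Real.sinh (γ * (T - t))) := funext fun y => hV t y
    rw [he]
    have := (((hasDerivAt_pow 2 q).const_mul (lam * γ / 2)).mul_const
      (Real.cosh (γ * (T - t)) / Real.sinh (γ * (T - t)))).deriv
    simpa using this
  rw [hVt, hVq, ← hγ2]
  have hid := Real.cosh_sq_sub_sinh_sq (γ * (T - t))
  field_simp
  linear_combination (-(lam*γ^2*q^2)) * hid

/-- The 1-D Almgren-Chriss value function
`V(t,q) = min ∫ₜᵀ [(λ/2)v² + (κσ²/2)q²]` over C² paths from `q` at `t` to `0` at `T`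
equals `(λγ/2) q² coth(γ(T−t))` with `γ = √(κσ²/λ)` (and the min is attained), and `V`
satisfies the Hamilton-Jacobi equation `∂ₜV − (∂_qV)²/(2λ) + (κσ²/2)q² = 0` on `[0,T) × ℝ`. -/
theorem stmt6 (lam κ σ T : ℝ) (hlam : 0 < lam) (hκ : 0 < κ) (hσ : 0 < σ) (hT : 0 < T)
    (γ : ℝ) (hγ : γ = Real.sqrt (κ * σ^2 / lam))
    (V : ℝ → ℝ → ℝ)
    (hV : ∀ t q, V t q = (lam * γ / 2) * q^2 * (Real.cosh (γ * (T - t)) / Real.sinh (γ * (T - t)))) :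
    (∀ t ∈ Set.Ico (0:ℝ) T, ∀ q : ℝ,
      IsLeast {x : ℝ | ∃ Q : ℝ → ℝ, ContDiff ℝ 2 Q ∧ Q t = q ∧ Q T = 0 ∧
          x = ∫ s in t..T, (lam/2) * (deriv Q s)^2 + (κ * σ^2/2) * (Q s)^2}
        (V t q)) ∧
    (∀ t ∈ Set.Ico (0:ℝ) T, ∀ q : ℝ,
      deriv (fun s => V s q) t - (deriv (fun y => V t y) q)^2 / (2 * lam)
        + (κ * σ^2/2) * q^2 = 0) := by
  have hγpos : 0 < γ := by rw [hγ]; exact Real.sqrt_pos.mpr (by positivity)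
  have hγ2 : lam * γ^2 = κ * σ^2 := by
    rw [hγ, Real.sq_sqrt (by positivity)]; field_simp
  refine ⟨?_, hjb_aux lam κ σ T hlam hκ hσ hT γ hγ V hV⟩
  rintro t ⟨ht0, htT⟩ q
  constructor
  · obtain ⟨Q, h1, h2, h3, h4⟩ := memb_aux lam κ σ T hlam hκ hσ hT γ hγpos hγ2 t htT q
    exact ⟨Q, h1, h2, h3, by rw [hV]; exact h4⟩
  · rintro x ⟨Q, hQ, hQt, hQT, rfl⟩
    rw [hV]
    exact lb_aux lam κ σ T hlam γ hγpos hγ2 t htT q Q hQ hQt hQT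
end
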